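/- arXiv:2304.05861 — 4 statements merged into one kernel-verified Lean document; each statement's English description precedes it below -/
import Mathlib

section
/- Let γ^L, γ^R : ℝ → ℝ² be differentiable at 0, let x₀ ∈ ℝ² and c₁, c₂ ∈ ℝ with c₁ ≠ 0, and for S ∈ {L, R} define the scaled boundary parametrization F^S(ζ, ξ) := (c₁ξ + c₂)·(γ^S(ζ) − x₀) + x₀. Suppose d₁, d₂ ∈ ℝ satisfy d₁·(γ^L)'(0) + d₂·(γ^R)'(0) = γ^L(0) − x₀. Set α^R := d₁, α^L := −d₂ and β(ξ) := −(c₁ξ + c₂)/c₁. Then for every ξ ∈ ℝ: α^R·∂_ζF^L(0, ξ) − α^L·∂_ζF^R(0, ξ) + β(ξ)·∂_ξF^L(0, ξ) = 0 in ℝ², where ∂_ζF^S(0, ξ) denotes the derivative at ζ = 0 of the curve ζ ↦ F^S(ζ, ξ) and ∂_ξF^L(0, ξ) denotes the derivative at ξ of the curve ξ' ↦ F^L(0, ξ'). -/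
/-- The central computation in the proof that scaled boundary two-patch parametrizations
are quasi analysis-suitable G¹: with `F^S(ζ,ξ) = (c₁ξ + c₂) • (γ^S(ζ) - x₀) + x₀` and
`d₁ • (γ^L)'(0) + d₂ • (γ^R)'(0) = γ^L(0) - x₀`, setting `α^R = d₁`, `α^L = -d₂`,
`β(ξ) = -(c₁ξ + c₂)/c₁`, the AS-G¹ identity holds for every `ξ`. -/
theorem sb_iga_asg1_identity
    (γL γR : ℝ → ℝ × ℝ)
    (hγL : DifferentiableAt ℝ γL 0) (hγR : DifferentiableAt ℝ γR 0)
    (x₀ : ℝ × ℝ) (c₁ c₂ : ℝ) (hc₁ : c₁ ≠ 0)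
    (d₁ d₂ : ℝ)
    (hd : d₁ • deriv γL 0 + d₂ • deriv γR 0 = γL 0 - x₀)
    (FL FR : ℝ → ℝ → ℝ × ℝ)
    (hFL : ∀ ζ ξ, FL ζ ξ = (c₁ * ξ + c₂) • (γL ζ - x₀) + x₀)
    (hFR : ∀ ζ ξ, FR ζ ξ = (c₁ * ξ + c₂) • (γR ζ - x₀) + x₀) :
    ∀ ξ : ℝ,
      d₁ • deriv (fun ζ => FL ζ ξ) 0
        - (-d₂) • deriv (fun ζ => FR ζ ξ) 0
        + (-(c₁ * ξ + c₂) / c₁) • deriv (fun ξ' => FL 0 ξ') ξ = 0 := by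
  intro ξ
  have hζ : ∀ (γ : ℝ → ℝ × ℝ), DifferentiableAt ℝ γ 0 →
      deriv (fun ζ => (c₁ * ξ + c₂) • (γ ζ - x₀) + x₀) 0
        = (c₁ * ξ + c₂) • deriv γ 0 := by
    intro γ hγ
    have h1 : DifferentiableAt ℝ (fun ζ => (c₁ * ξ + c₂) • (γ ζ - x₀)) 0 :=
      ((hγ.sub_const x₀).fun_const_smul _)
    rw [deriv_add_const, deriv_fun_const_smul _ (hγ.sub_const x₀), deriv_sub_const]
  have hξ : deriv (fun ξ' => (c₁ * ξ' + c₂) • (γL 0 - x₀) + x₀) ξ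
      = c₁ • (γL 0 - x₀) := by
    have : (fun ξ' => (c₁ * ξ' + c₂) • (γL 0 - x₀) + x₀)
        = fun ξ' => ξ' • (c₁ • (γL 0 - x₀)) + (c₂ • (γL 0 - x₀) + x₀) := by
      funext ξ'
      simp [add_smul, smul_smul, mul_comm, add_assoc]
    rw [this, deriv_add_const,
      ((hasDerivAt_id' ξ).smul_const (c₁ • (γL 0 - x₀))).deriv, one_smul]
  simp only [show (fun ζ => FL ζ ξ) = fun ζ => (c₁ * ξ + c₂) • (γL ζ - x₀) + x₀ from
      funext fun ζ => hFL ζ ξ,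
    show (fun ζ => FR ζ ξ) = fun ζ => (c₁ * ξ + c₂) • (γR ζ - x₀) + x₀ from
      funext fun ζ => hFR ζ ξ,
    show (fun ξ' => FL 0 ξ') = fun ξ' => (c₁ * ξ' + c₂) • (γL 0 - x₀) + x₀ from
      funext fun ξ' => hFL 0 ξ']
  rw [hζ γL hγL, hζ γR hγR, hξ]
  have hcoef : (-(c₁ * ξ + c₂) / c₁) * c₁ = -(c₁ * ξ + c₂) := by
    field_simp
  have h : (-(c₁ * ξ + c₂) / c₁) • c₁ • (γL 0 - x₀) = (-(c₁ * ξ + c₂)) • (γL 0 - x₀) := by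
    rw [smul_smul, hcoef]
  rw [h, ← hd]
  module
end

section
/- (SB-IGA patch coupling is quasi AS-G¹.) Let γ^L, γ^R : ℝ → ℝ² be differentiable at 0 with γ^L(0) = γ^R(0), (γ^L)'(0) ≠ 0 and (γ^R)'(0) ≠ 0, let x₀ ∈ ℝ², c₁ > 0, c₂ ≥ 0, and define F^S(ζ, ξ) := (c₁ξ + c₂)·(γ^S(ζ) − x₀) + x₀ for S ∈ {L, R}. Assume either (i) (γ^R)'(0) = c·(γ^L)'(0) for some c > 0, or (ii) (γ^L)'(0) and (γ^R)'(0) are linearly independent and neither γ^L(0) − x₀ nor x₀ − γ^L(0) lies in the closed cone {a₁·(γ^L)'(0) + a₂·(γ^R)'(0) : a₁ ≥ 0, a₂ ≥ 0}. Then there exist constants α^L, α^R ∈ ℝ and polynomial functions β, β^L, β^R : ℝ → ℝ of degree at most 1 such that α^L·α^R > 0, β = α^L·β^R − α^R·β^L, and for all ξ ∈ [0, 1]: α^R·∂_ζF^L(0, ξ) − α^L·∂_ζF^R(0, ξ) + β(ξ)·∂_ξF^L(0, ξ) = 0 in ℝ². -/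
/-- SB-IGA patch coupling is quasi AS-G¹: for a scaled boundary two-patch parametrization
`F^S(ζ,ξ) = (c₁ξ + c₂) • (γ^S(ζ) - x₀) + x₀`, under either the parallel-tangent case (i) or the
linearly-independent-tangents-with-cone-condition case (ii), there exist constants `α^L, α^R`
and degree-≤1 polynomial functions `β, β^L, β^R` with `α^L·α^R > 0`,
`β = α^L·β^R − α^R·β^L`, satisfying the AS-G¹ identity on `[0,1]`. -/
theorem sb_iga_quasi_asg1
    (γL γR : ℝ → ℝ × ℝ)
    (hγL : DifferentiableAt ℝ γL 0) (hγR : DifferentiableAt ℝ γR 0)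
    (hmeet : γL 0 = γR 0)
    (hL0 : deriv γL 0 ≠ 0) (hR0 : deriv γR 0 ≠ 0)
    (x₀ : ℝ × ℝ) (c₁ c₂ : ℝ) (hc₁ : 0 < c₁) (hc₂ : 0 ≤ c₂)
    (FL FR : ℝ → ℝ → ℝ × ℝ)
    (hFL : ∀ ζ ξ, FL ζ ξ = (c₁ * ξ + c₂) • (γL ζ - x₀) + x₀)
    (hFR : ∀ ζ ξ, FR ζ ξ = (c₁ * ξ + c₂) • (γR ζ - x₀) + x₀)
    (hcase :
      (∃ c : ℝ, 0 < c ∧ deriv γR 0 = c • deriv γL 0) ∨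
      (LinearIndependent ℝ ![deriv γL 0, deriv γR 0] ∧
        γL 0 - x₀ ∉ {x : ℝ × ℝ | ∃ a₁ a₂ : ℝ, 0 ≤ a₁ ∧ 0 ≤ a₂ ∧
          x = a₁ • deriv γL 0 + a₂ • deriv γR 0} ∧
        x₀ - γL 0 ∉ {x : ℝ × ℝ | ∃ a₁ a₂ : ℝ, 0 ≤ a₁ ∧ 0 ≤ a₂ ∧
          x = a₁ • deriv γL 0 + a₂ • deriv γR 0})) :
    ∃ (αL αR : ℝ) (β βL βR : ℝ → ℝ),
      (∃ b₀ b₁ : ℝ, ∀ ξ, β ξ = b₀ + b₁ * ξ) ∧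
      (∃ b₀ b₁ : ℝ, ∀ ξ, βL ξ = b₀ + b₁ * ξ) ∧
      (∃ b₀ b₁ : ℝ, ∀ ξ, βR ξ = b₀ + b₁ * ξ) ∧
      αL * αR > 0 ∧
      (∀ ξ, β ξ = αL * βR ξ - αR * βL ξ) ∧
      ∀ ξ ∈ Set.Icc (0 : ℝ) 1,
        αR • deriv (fun ζ => FL ζ ξ) 0
          - αL • deriv (fun ζ => FR ζ ξ) 0
          + β ξ • deriv (fun ξ' => FL 0 ξ') ξ = 0 := by
  set vL := deriv γL 0 with hvL
  set vR := deriv γR 0 with hvR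
  -- derivatives in ζ
  have hdL : ∀ ξ : ℝ, deriv (fun ζ => FL ζ ξ) 0 = (c₁ * ξ + c₂) • vL := by
    intro ξ
    have h : HasDerivAt (fun ζ => (c₁ * ξ + c₂) • (γL ζ - x₀) + x₀)
        ((c₁ * ξ + c₂) • vL) 0 := by
      simpa using ((hγL.hasDerivAt.sub_const x₀).const_smul (c₁ * ξ + c₂)).add_const x₀
    have : (fun ζ => FL ζ ξ) = fun ζ => (c₁ * ξ + c₂) • (γL ζ - x₀) + x₀ := by
      funext ζ; exact hFL ζ ξ
    rw [this, h.deriv]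
  have hdR : ∀ ξ : ℝ, deriv (fun ζ => FR ζ ξ) 0 = (c₁ * ξ + c₂) • vR := by
    intro ξ
    have h : HasDerivAt (fun ζ => (c₁ * ξ + c₂) • (γR ζ - x₀) + x₀)
        ((c₁ * ξ + c₂) • vR) 0 := by
      simpa using ((hγR.hasDerivAt.sub_const x₀).const_smul (c₁ * ξ + c₂)).add_const x₀
    have : (fun ζ => FR ζ ξ) = fun ζ => (c₁ * ξ + c₂) • (γR ζ - x₀) + x₀ := by
      funext ζ; exact hFR ζ ξ
    rw [this, h.deriv]
  -- derivative in ξ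
  have hdXi : ∀ ξ : ℝ, deriv (fun ξ' => FL 0 ξ') ξ = c₁ • (γL 0 - x₀) := by
    intro ξ
    have hs : HasDerivAt (fun ξ' : ℝ => c₁ * ξ' + c₂) c₁ ξ := by
      simpa using ((hasDerivAt_id ξ).const_mul c₁).add_const c₂
    have h : HasDerivAt (fun ξ' => (c₁ * ξ' + c₂) • (γL 0 - x₀) + x₀)
        (c₁ • (γL 0 - x₀)) ξ := (hs.smul_const (γL 0 - x₀)).add_const x₀
    have : (fun ξ' => FL 0 ξ') = fun ξ' => (c₁ * ξ' + c₂) • (γL 0 - x₀) + x₀ := by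
      funext ξ'; exact hFL 0 ξ'
    rw [this, h.deriv]
  rcases hcase with ⟨c, hc, hcR⟩ | ⟨hli, hcone1, hcone2⟩
  · -- parallel tangents
    refine ⟨1, c, (fun _ => 0), (fun _ => 0), (fun _ => 0),
      ⟨0, 0, by intro ξ; ring⟩, ⟨0, 0, by intro ξ; ring⟩, ⟨0, 0, by intro ξ; ring⟩,
      by simpa using hc, by intro ξ; ring, ?_⟩
    intro ξ _
    rw [hdL ξ, hdR ξ, hdXi ξ, hcR]
    simp [smul_smul, mul_comm]
  · -- linearly independent tangents with cone condition
    have hcard : Fintype.card (Fin 2) = Module.finrank ℝ (ℝ × ℝ) := by simp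
    let b : Module.Basis (Fin 2) ℝ (ℝ × ℝ) := basisOfLinearIndependentOfCardEqFinrank hli hcard
    have hb0 : b 0 = vL := by
      simp [b, coe_basisOfLinearIndependentOfCardEqFinrank]
    have hb1 : b 1 = vR := by
      simp [b, coe_basisOfLinearIndependentOfCardEqFinrank]
    set u : ℝ × ℝ := γL 0 - x₀ with hu
    set a₁ : ℝ := b.repr u 0 with ha₁
    set a₂ : ℝ := b.repr u 1 with ha₂
    have hrep : u = a₁ • vL + a₂ • vR := by
      conv_lhs => rw [← b.sum_repr u]
      rw [Fin.sum_univ_two, hb0, hb1]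
    have hn1 : ¬ (0 ≤ a₁ ∧ 0 ≤ a₂) := by
      rintro ⟨h1, h2⟩
      exact hcone1 ⟨a₁, a₂, h1, h2, hrep⟩
    have hn2 : ¬ (a₁ ≤ 0 ∧ a₂ ≤ 0) := by
      rintro ⟨h1, h2⟩
      refine hcone2 ⟨-a₁, -a₂, by linarith, by linarith, ?_⟩
      have : x₀ - γL 0 = -u := by rw [hu]; abel
      rw [this, hrep]; module
    have hmix : a₁ * a₂ < 0 := by
      rcases lt_or_ge a₁ 0 with h | h
      · rcases lt_or_ge 0 a₂ with h' | h'
        · exact mul_neg_of_neg_of_pos h h'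
        · exact absurd ⟨le_of_lt h, h'⟩ hn2
      · rcases lt_or_ge a₂ 0 with h' | h'
        · have h1 : a₁ ≠ 0 := fun e => hn2 ⟨le_of_eq e, le_of_lt h'⟩
          exact mul_neg_of_pos_of_neg (lt_of_le_of_ne h (Ne.symm h1)) h'
        · exact absurd ⟨h, h'⟩ hn1
    have ha2ne : a₂ ≠ 0 := by
      intro h; rw [h, mul_zero] at hmix; exact lt_irrefl 0 hmix
    refine ⟨a₂, -a₁, (fun ξ => c₂ / c₁ + ξ), (fun _ => 0),
      (fun ξ => (c₂ / c₁ + ξ) / a₂),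
      ⟨c₂ / c₁, 1, by intro ξ; ring⟩, ⟨0, 0, by intro ξ; ring⟩,
      ⟨c₂ / c₁ / a₂, 1 / a₂, by intro ξ; field_simp⟩,
      by nlinarith, by intro ξ; field_simp; ring, ?_⟩
    intro ξ _
    rw [hdL ξ, hdR ξ, hdXi ξ, hrep]
    have h2 : (c₂ / c₁ + ξ) • (c₁ • (a₁ • vL + a₂ • vR))
        = (c₁ * ξ + c₂) • (a₁ • vL + a₂ • vR) := by
      rw [smul_smul]
      congr 1
      field_simp
      ring
    show (-a₁) • ((c₁ * ξ + c₂) • vL) - a₂ • ((c₁ * ξ + c₂) • vR)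
        + (c₂ / c₁ + ξ) • (c₁ • (a₁ • vL + a₂ • vR)) = 0
    rw [h2]
    module
end

section
/- Let γ = (γ₁, γ₂) : ℝ → ℝ² be differentiable at ζ ∈ ℝ with d(ζ) := γ₁'(ζ)·γ₂(ζ) − γ₂'(ζ)·γ₁(ζ) ≠ 0, let ξ ≠ 0, and let φ : ℝ² → ℝ be differentiable at the point p := ξ·γ(ζ). Define φ̂(ζ', ξ') := φ(ξ'·γ(ζ')). Then the partial derivatives ∂_ζφ̂(ζ, ξ) (derivative at ζ of ζ' ↦ φ̂(ζ', ξ)) and ∂_ξφ̂(ζ, ξ) (derivative at ξ of ξ' ↦ φ̂(ζ, ξ')) exist, and the physical partial derivatives of φ at p are recovered as ∂_xφ(p) = (γ₂(ζ)·∂_ζφ̂(ζ, ξ) − ξ·γ₂'(ζ)·∂_ξφ̂(ζ, ξ)) / (ξ·d(ζ)) and ∂_yφ(p) = (−γ₁(ζ)·∂_ζφ̂(ζ, ξ) + ξ·γ₁'(ζ)·∂_ξφ̂(ζ, ξ)) / (ξ·d(ζ)). -/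
/-- Inversion of the chain rule away from the scaling center (equation (13) of the paper):
for the singular scaled boundary parametrization `F(ζ,ξ) = ξ·γ(ζ)` with
`d(ζ) = γ₁'(ζ)γ₂(ζ) − γ₂'(ζ)γ₁(ζ) ≠ 0` and `ξ ≠ 0`, the parametric partial derivatives of
`φ̂(ζ',ξ') = φ(ξ'·γ(ζ'))` exist and the physical partial derivatives of `φ` at `p = ξ·γ(ζ)`
are recovered as
`∂_xφ(p) = (γ₂·∂_ζφ̂ − ξγ₂'·∂_ξφ̂)/(ξ·d)` and `∂_yφ(p) = (−γ₁·∂_ζφ̂ + ξγ₁'·∂_ξφ̂)/(ξ·d)`. -/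
theorem pushforward_derivative_formula
    (γ₁ γ₂ : ℝ → ℝ) (ζ : ℝ)
    (h₁ : DifferentiableAt ℝ γ₁ ζ) (h₂ : DifferentiableAt ℝ γ₂ ζ)
    (hd : deriv γ₁ ζ * γ₂ ζ - deriv γ₂ ζ * γ₁ ζ ≠ 0)
    (ξ : ℝ) (hξ : ξ ≠ 0)
    (φ : ℝ × ℝ → ℝ)
    (hφ : DifferentiableAt ℝ φ (ξ • (γ₁ ζ, γ₂ ζ))) :
    DifferentiableAt ℝ (fun ζ' => φ (ξ • (γ₁ ζ', γ₂ ζ'))) ζ ∧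
    DifferentiableAt ℝ (fun ξ' => φ (ξ' • (γ₁ ζ, γ₂ ζ))) ξ ∧
    fderiv ℝ φ (ξ • (γ₁ ζ, γ₂ ζ)) (1, 0)
      = (γ₂ ζ * deriv (fun ζ' => φ (ξ • (γ₁ ζ', γ₂ ζ'))) ζ
          - ξ * deriv γ₂ ζ * deriv (fun ξ' => φ (ξ' • (γ₁ ζ, γ₂ ζ))) ξ)
        / (ξ * (deriv γ₁ ζ * γ₂ ζ - deriv γ₂ ζ * γ₁ ζ)) ∧
    fderiv ℝ φ (ξ • (γ₁ ζ, γ₂ ζ)) (0, 1)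
      = (-(γ₁ ζ) * deriv (fun ζ' => φ (ξ • (γ₁ ζ', γ₂ ζ'))) ζ
          + ξ * deriv γ₁ ζ * deriv (fun ξ' => φ (ξ' • (γ₁ ζ, γ₂ ζ))) ξ)
        / (ξ * (deriv γ₁ ζ * γ₂ ζ - deriv γ₂ ζ * γ₁ ζ)) := by

  set A := fderiv ℝ φ (ξ • (γ₁ ζ, γ₂ ζ)) with hA
  have hφ' : HasFDerivAt φ A (ξ • (γ₁ ζ, γ₂ ζ)) := hφ.hasFDerivAt
  -- inner map in ζ
  have hin1 : HasDerivAt (fun ζ' => ξ • (γ₁ ζ', γ₂ ζ')) (ξ • (deriv γ₁ ζ, deriv γ₂ ζ)) ζ :=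
    ((h₁.hasDerivAt.prodMk h₂.hasDerivAt).const_smul ξ)
  have hin2 : HasDerivAt (fun ξ' : ℝ => ξ' • ((γ₁ ζ, γ₂ ζ) : ℝ × ℝ)) ((γ₁ ζ, γ₂ ζ)) ξ := by
    simpa using (hasDerivAt_id ξ).smul_const ((γ₁ ζ, γ₂ ζ) : ℝ × ℝ)
  have H1 : HasDerivAt (fun ζ' => φ (ξ • (γ₁ ζ', γ₂ ζ'))) (A (ξ • (deriv γ₁ ζ, deriv γ₂ ζ))) ζ :=
    hφ'.comp_hasDerivAt ζ hin1
  have H2 : HasDerivAt (fun ξ' => φ (ξ' • (γ₁ ζ, γ₂ ζ))) (A (γ₁ ζ, γ₂ ζ)) ξ :=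
    hφ'.comp_hasDerivAt ξ hin2
  refine ⟨H1.differentiableAt, H2.differentiableAt, ?_, ?_⟩ <;>
  · rw [H1.deriv, H2.deriv]
    have e1 : (ξ • (deriv γ₁ ζ, deriv γ₂ ζ) : ℝ × ℝ)
        = (ξ * deriv γ₁ ζ) • ((1:ℝ), (0:ℝ)) + (ξ * deriv γ₂ ζ) • ((0:ℝ), (1:ℝ)) := by
      simp [Prod.ext_iff]
    have e2 : ((γ₁ ζ, γ₂ ζ) : ℝ × ℝ)
        = (γ₁ ζ) • ((1:ℝ), (0:ℝ)) + (γ₂ ζ) • ((0:ℝ), (1:ℝ)) := by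
      simp [Prod.ext_iff]
    rw [e1, e2, map_add, map_add, map_smul, map_smul, map_smul, map_smul]
    simp only [smul_eq_mul]
    rw [eq_div_iff (mul_ne_zero hξ hd)]
    ring
end

section
/- Let α^L, α^R ∈ ℝ and let β^L, β^R, β : ℝ → ℝ satisfy β = α^L·β^R − α^R·β^L (pointwise). Let B : ℝ → ℝ be differentiable, let C : ℝ → ℝ be arbitrary, and for S ∈ {L, R} let ĉ^S : ℝ → ℝ be differentiable at 0 with ĉ^S(0) = 0 and (ĉ^S)'(0) = 1. Define ĝ^S(ζ, ξ) := B(ξ) + (β^S(ξ)·B'(ξ) + α^S·C(ξ))·ĉ^S(ζ). Then for every ξ ∈ ℝ: (a) ĝ^L(0, ξ) = ĝ^R(0, ξ) = B(ξ) (continuity across the interface with trace B); (b) ∂_ζĝ^S(0, ξ) = β^S(ξ)·B'(ξ) + α^S·C(ξ) and ∂_ξĝ^R(0, ξ) = B'(ξ); and (c) the scalar C¹ gluing condition holds: α^R·∂_ζĝ^L(0, ξ) − α^L·∂_ζĝ^R(0, ξ) + β(ξ)·∂_ξĝ^R(0, ξ) = 0. -/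
/-- The interface-space construction: given gluing data `α^L, α^R, β^L, β^R` with
`β = α^L·β^R − α^R·β^L`, a differentiable trace function `B`, a transversal-derivative
function `C`, and functions `ĉ^S` differentiable at `0` with `ĉ^S(0) = 0`, `(ĉ^S)'(0) = 1`,
the parametric functions `ĝ^S(ζ,ξ) = B(ξ) + (β^S(ξ)·B'(ξ) + α^S·C(ξ))·ĉ^S(ζ)` satisfy:
(a) continuity across the interface with trace `B`; (b) `∂_ζĝ^S(0,ξ) = β^S(ξ)B'(ξ) + α^S C(ξ)`
and `∂_ξĝ^R(0,ξ) = B'(ξ)`; and (c) the scalar C¹ gluing condition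
`α^R·∂_ζĝ^L(0,ξ) − α^L·∂_ζĝ^R(0,ξ) + β(ξ)·∂_ξĝ^R(0,ξ) = 0`. -/
theorem interface_space_construction
    (αL αR : ℝ) (βL βR β : ℝ → ℝ)
    (hβ : ∀ ξ, β ξ = αL * βR ξ - αR * βL ξ)
    (B : ℝ → ℝ) (hB : Differentiable ℝ B)
    (C : ℝ → ℝ)
    (cL cR : ℝ → ℝ)
    (hcL : DifferentiableAt ℝ cL 0) (hcR : DifferentiableAt ℝ cR 0)
    (hcL0 : cL 0 = 0) (hcR0 : cR 0 = 0)
    (hcL1 : deriv cL 0 = 1) (hcR1 : deriv cR 0 = 1)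
    (gL gR : ℝ → ℝ → ℝ)
    (hgL : ∀ ζ ξ, gL ζ ξ = B ξ + (βL ξ * deriv B ξ + αL * C ξ) * cL ζ)
    (hgR : ∀ ζ ξ, gR ζ ξ = B ξ + (βR ξ * deriv B ξ + αR * C ξ) * cR ζ) :
    ∀ ξ : ℝ,
      (gL 0 ξ = B ξ ∧ gR 0 ξ = B ξ) ∧
      (deriv (fun ζ => gL ζ ξ) 0 = βL ξ * deriv B ξ + αL * C ξ ∧
       deriv (fun ζ => gR ζ ξ) 0 = βR ξ * deriv B ξ + αR * C ξ ∧
       deriv (fun ξ' => gR 0 ξ') ξ = deriv B ξ) ∧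
      αR * deriv (fun ζ => gL ζ ξ) 0 - αL * deriv (fun ζ => gR ζ ξ) 0
        + β ξ * deriv (fun ξ' => gR 0 ξ') ξ = 0 := by
  intro ξ
  have hLζ : deriv (fun ζ => gL ζ ξ) 0 = βL ξ * deriv B ξ + αL * C ξ := by
    have : (fun ζ => gL ζ ξ) = fun ζ => B ξ + (βL ξ * deriv B ξ + αL * C ξ) * cL ζ := by
      funext ζ; exact hgL ζ ξ
    rw [this, deriv_const_add, deriv_const_mul _ hcL, hcL1, mul_one]
  have hRζ : deriv (fun ζ => gR ζ ξ) 0 = βR ξ * deriv B ξ + αR * C ξ := by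
    have : (fun ζ => gR ζ ξ) = fun ζ => B ξ + (βR ξ * deriv B ξ + αR * C ξ) * cR ζ := by
      funext ζ; exact hgR ζ ξ
    rw [this, deriv_const_add, deriv_const_mul _ hcR, hcR1, mul_one]
  have hRξ : deriv (fun ξ' => gR 0 ξ') ξ = deriv B ξ := by
    have : (fun ξ' => gR 0 ξ') = B := by
      funext ξ'; rw [hgR 0 ξ', hcR0, mul_zero, add_zero]
    rw [this]
  refine ⟨⟨by rw [hgL 0 ξ, hcL0, mul_zero, add_zero], by rw [hgR 0 ξ, hcR0, mul_zero, add_zero]⟩,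
    ⟨hLζ, hRζ, hRξ⟩, ?_⟩
  rw [hLζ, hRζ, hRξ, hβ ξ]; ring
end
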